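/- arXiv:1309.0580 — 3 statements merged into one kernel-verified Lean document; each statement's English description precedes it below -/
import Mathlib

section
/- For all n ≥ 1, the sum over pairs (a,b) of non-negative integers with a+b=n of (2a-1)·(B_{2a}/(2a)!)·(B_{2b}/(2b)!)·h_{a,b}(x,y) equals 0 in the polynomial ring ℚ[x,y], where B_k denotes the k-th Bernoulli number and h_{a,b}(x,y) = x^{2a-1}y^{2b} - x^{2b}y^{2a-1} + xy(x+y)^{2b-1}(y^{2a-2} - x^{2a-2}). -/
open scoped BigOperators

noncomputable section

namespace Stmt0

/-- The fraction field of `ℚ[x,y]`, in which the (possibly negative) exponents occurring in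
`h_{a,b}` make sense. -/
abbrev K := FractionRing (MvPolynomial (Fin 2) ℚ)

noncomputable def x : K := algebraMap (MvPolynomial (Fin 2) ℚ) K (MvPolynomial.X 0)

noncomputable def y : K := algebraMap (MvPolynomial (Fin 2) ℚ) K (MvPolynomial.X 1)

/-- `h_{a,b}(x,y) = x^{2a-1} y^{2b} - x^{2b} y^{2a-1} + x y (x+y)^{2b-1} (y^{2a-2} - x^{2a-2})`,
with the negative exponents arising for `a = 0` or `b = 0` interpreted in the fraction field. -/
noncomputable def h (a b : ℕ) : K :=
  x ^ (2 * a) * y ^ (2 * b) / x - x ^ (2 * b) * y ^ (2 * a) / y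
    + x * y * ((x + y) ^ (2 * b) / (x + y)) * (y ^ (2 * a) / y ^ 2 - x ^ (2 * a) / x ^ 2)

namespace Aux

open PowerSeries

abbrev S := MvPolynomial (Fin 2) ℚ

/-- The even Bernoulli generating function `∑ B_{2a} t^{2a}/(2a)! = (t/2)coth(t/2)`
(all odd coefficients vanish). -/
def G : PowerSeries ℚ := bernoulliPowerSeries ℚ + PowerSeries.C (R := ℚ) (1/2) * PowerSeries.X

/-- `∑ (2a-1) B_{2a} t^{2a}/(2a)! = t G' - G`. -/
def Cs : PowerSeries ℚ := PowerSeries.X * derivativeFun G - G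

lemma two_C_half : (PowerSeries.C (R := ℚ) (1/2)) * 2 = 1 := by
  have h : (2 : PowerSeries ℚ) = PowerSeries.C (R := ℚ) 2 := (map_ofNat (PowerSeries.C (R := ℚ)) 2).symm
  rw [h, ← map_mul]; norm_num

lemma L1 : 2 * G * (exp ℚ - 1) = PowerSeries.X * (exp ℚ + 1) := by
  have hb := bernoulliPowerSeries_mul_exp_sub_one ℚ
  unfold G
  linear_combination 2 * hb + (PowerSeries.X * (exp ℚ - 1)) * two_C_half

lemma derivative_exp : derivativeFun (exp ℚ) = exp ℚ := by
  ext n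
  rw [show derivativeFun (exp ℚ) = PowerSeries.derivative ℚ (exp ℚ) from rfl, coeff_derivativeFun, coeff_exp, coeff_exp]
  simp only [eq_ratCast, Rat.cast_id]
  field_simp [Nat.factorial_succ]
  push_cast [Nat.factorial_succ]
  ring

lemma der_apply (f : PowerSeries ℚ) : (PowerSeries.derivative ℚ) f = derivativeFun f := rfl

lemma derFun_two : derivativeFun (2 : PowerSeries ℚ) = 0 := by
  rw [show (2 : PowerSeries ℚ) = PowerSeries.C (R := ℚ) 2 from (map_ofNat _ 2).symm]
  exact derivativeFun_C (r := (2:ℚ))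

lemma Ldagger : 2 * (exp ℚ - 1) * derivativeFun G
    = exp ℚ + 1 + PowerSeries.X * exp ℚ - 2 * G * exp ℚ := by
  have h := congrArg (⇑(PowerSeries.derivative ℚ)) L1
  simp only [Derivation.leibniz, map_sub, map_add, map_one, derivative_X, derFun_two,
    der_apply, derivative_exp, derivativeFun_one, smul_eq_mul] at h
  linear_combination h

lemma L2 : 2 * Cs * (exp ℚ - 1) ^ 2 = -(2 * PowerSeries.X ^ 2 * exp ℚ) := by
  unfold Cs
  linear_combination (PowerSeries.X * (exp ℚ - 1)) * Ldagger
    + (- (PowerSeries.X * exp ℚ) - (exp ℚ - 1)) * L1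

lemma coeff_G (n : ℕ) (hn : n ≠ 1) : coeff (R := ℚ) n G = bernoulli n / n.factorial := by
  simp [G, bernoulliPowerSeries, coeff_mk, coeff_X, hn]

lemma coeff_G_odd (n : ℕ) (hn : Odd n) : coeff (R := ℚ) n G = 0 := by
  rcases eq_or_ne n 1 with rfl | h1
  · simp [G, bernoulliPowerSeries, coeff_mk, coeff_X, bernoulli_one]
    norm_num
  · rw [coeff_G n h1, bernoulli_eq_bernoulli'_of_ne_one h1,
      bernoulli'_eq_zero_of_odd hn (by rcases hn with ⟨k, rfl⟩; omega), zero_div]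

lemma coeff_Cs (n : ℕ) : coeff (R := ℚ) n Cs = ((n : ℚ) - 1) * coeff (R := ℚ) n G := by
  rcases n with _ | m
  · have h0 : coeff (R := ℚ) 0 (PowerSeries.X * derivativeFun G) = 0 := by
      rw [coeff_zero_eq_constantCoeff_apply, map_mul, constantCoeff_X, zero_mul]
    rw [Cs, map_sub, h0]
    push_cast
    ring
  · rw [Cs, map_sub, coeff_succ_X_mul, ← der_apply, coeff_derivativeFun]
    push_cast
    ring

lemma coeff_Cs_odd (n : ℕ) (hn : Odd n) : coeff (R := ℚ) n Cs = 0 := by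
  rw [coeff_Cs, coeff_G_odd n hn, mul_zero]

lemma coeff_G2 (a : ℕ) : coeff (R := ℚ) (2 * a) G = bernoulli (2 * a) / (2 * a).factorial :=
  coeff_G (2 * a) (by omega)

lemma coeff_Cs2 (a : ℕ) : coeff (R := ℚ) (2 * a) Cs
    = (2 * (a : ℚ) - 1) * (bernoulli (2 * a) / (2 * a).factorial) := by
  rw [coeff_Cs, coeff_G2]
  push_cast
  ring

/-- Base change `ℚ⟦X⟧ → S⟦X⟧`. -/
def φm : PowerSeries ℚ →+* PowerSeries S := PowerSeries.map (algebraMap ℚ S)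

lemma map_exp : φm (exp ℚ) = exp S := by
  ext n
  simp [φm, coeff_map, coeff_exp]

lemma rescale_X' (u : S) : rescale u (PowerSeries.X : PowerSeries S)
    = PowerSeries.C (R := S) u * PowerSeries.X := by
  ext n
  simp only [coeff_rescale, coeff_X, coeff_C_mul]
  split_ifs with hn
  · subst hn; ring
  · ring

/-- `G(u·t)`, `C(u·t)`, `e^{u·t}` as power series over `S`. -/
def Gr (u : S) : PowerSeries S := rescale u (φm G)
def Cr (u : S) : PowerSeries S := rescale u (φm Cs)
def Er (u : S) : PowerSeries S := rescale u (exp S)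

lemma relG (u : S) : 2 * Gr u * (Er u - 1)
    = (PowerSeries.C (R := S) u * PowerSeries.X) * (Er u + 1) := by
  have h := congrArg (⇑((rescale u).comp φm)) L1
  simpa only [RingHom.comp_apply, map_mul, map_sub, map_add, map_one, map_ofNat,
    Stmt0.Aux.map_exp, PowerSeries.map_exp, φm, PowerSeries.map_X, rescale_X', Gr, Er] using h

lemma relC (u : S) : 2 * Cr u * (Er u - 1) ^ 2
    = -(2 * (PowerSeries.C (R := S) u * PowerSeries.X) ^ 2 * Er u) := by
  have h := congrArg (⇑((rescale u).comp φm)) L2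
  simpa only [RingHom.comp_apply, map_mul, map_sub, map_add, map_one, map_ofNat, map_pow,
    map_neg, Stmt0.Aux.map_exp, PowerSeries.map_exp, PowerSeries.map_X, rescale_X', Cr, Er, φm] using h

lemma Er_sub_one_ne (u : S) (hu : u ≠ 0) : Er u - 1 ≠ 0 := by
  intro hcon
  have h := congrArg (⇑(coeff (R := S) 1)) hcon
  simp [Er, coeff_rescale, coeff_exp, coeff_one] at h
  exact hu h

lemma four_ne : (4 : PowerSeries S) ≠ 0 := by
  intro hcon
  have h := congrArg (⇑(PowerSeries.constantCoeff (R := S))) hcon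
  simp only [map_ofNat, map_zero] at h
  norm_num at h

/-- The central generating-function identity (the coth addition law in disguise). -/
lemma Tzero :
    PowerSeries.C (R := S) ((MvPolynomial.X 0 + MvPolynomial.X 1) * MvPolynomial.X 0
        * (MvPolynomial.X 1 : S) ^ 2) * PowerSeries.X ^ 4
        * (Cr (MvPolynomial.X 0) * Gr (MvPolynomial.X 1))
      - PowerSeries.C (R := S) ((MvPolynomial.X 0 + MvPolynomial.X 1) * (MvPolynomial.X 0 : S) ^ 2
        * MvPolynomial.X 1) * PowerSeries.X ^ 4
        * (Cr (MvPolynomial.X 1) * Gr (MvPolynomial.X 0))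
      + PowerSeries.C (R := S) ((MvPolynomial.X 0 : S) ^ 3 * MvPolynomial.X 1) * PowerSeries.X ^ 4
        * (Cr (MvPolynomial.X 1) * Gr (MvPolynomial.X 0 + MvPolynomial.X 1))
      - PowerSeries.C (R := S) (MvPolynomial.X 0 * (MvPolynomial.X 1 : S) ^ 3) * PowerSeries.X ^ 4
        * (Cr (MvPolynomial.X 0) * Gr (MvPolynomial.X 0 + MvPolynomial.X 1)) = 0 := by
  have hW : Er (MvPolynomial.X 0) * Er (MvPolynomial.X 1)
      = Er (MvPolynomial.X 0 + MvPolynomial.X 1) :=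
    exp_mul_exp_eq_exp_add (MvPolynomial.X 0) (MvPolynomial.X 1)
  have h1 := relG (MvPolynomial.X 0 : S)
  have h2 := relG (MvPolynomial.X 1 : S)
  have h3 := relG (MvPolynomial.X 0 + MvPolynomial.X 1 : S)
  rw [map_add, add_mul] at h3
  have h4 := relC (MvPolynomial.X 0 : S)
  have h5 := relC (MvPolynomial.X 1 : S)
  simp only [map_add, map_mul, map_pow]
  set x := PowerSeries.C (R := S) (MvPolynomial.X 0) * PowerSeries.X with hxdef
  set y := PowerSeries.C (R := S) (MvPolynomial.X 1) * PowerSeries.X with hydef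
  set Ea := Er (MvPolynomial.X 0)
  set Eb := Er (MvPolynomial.X 1)
  set Ew := Er (MvPolynomial.X 0 + MvPolynomial.X 1)
  set Ga := Gr (MvPolynomial.X 0)
  set Gb := Gr (MvPolynomial.X 1)
  set Gw := Gr (MvPolynomial.X 0 + MvPolynomial.X 1)
  set Ca := Cr (MvPolynomial.X 0)
  set Cb := Cr (MvPolynomial.X 1)
  have key : ((x+y) * x * y^2 * (Ca * Gb) - (x+y) * x^2 * y * (Cb * Ga)
      + x^3 * y * (Cb * Gw) - x * y^3 * (Ca * Gw))
      * (((Ea - 1) * (Eb - 1) * (Ew - 1)) ^ 2 * 4) = 0 := by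
    linear_combination
      ((x+y)*x*y^2*2*Gb*(Eb-1)^2*(Ew-1)^2 - 2*x*y^3*Gw*(Eb-1)^2*(Ew-1)^2) * h4
      + (-(2*(x+y)*x^3*y^2*Ea*(Eb-1)*(Ew-1)^2)) * h2
      + (-(2*(x+y)*x^2*y*Ga*(Ea-1)^2*(Ew-1)^2) + 2*x^3*y*Gw*(Ea-1)^2*(Ew-1)^2) * h5
      + (2*(x+y)*x^2*y^3*Eb*(Ea-1)*(Ew-1)^2) * h1
      + (-(2*x^3*y^3*Eb*(Ea-1)^2*(Ew-1)) + 2*x^3*y^3*Ea*(Eb-1)^2*(Ew-1)) * h3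
      + (-(4*x^3*y^3*(x+y)*(Ew-1)*(Ea-Eb))) * hW
  have hne : (((Ea - 1) * (Eb - 1) * (Ew - 1)) ^ 2 * 4) ≠ 0 := by
    refine mul_ne_zero (pow_ne_zero _ (mul_ne_zero (mul_ne_zero ?_ ?_) ?_)) four_ne
    · exact Er_sub_one_ne _ (MvPolynomial.X_ne_zero 0)
    · exact Er_sub_one_ne _ (MvPolynomial.X_ne_zero 1)
    · refine Er_sub_one_ne _ ?_
      intro hcon
      have := congrArg (MvPolynomial.eval (fun _ => (1:ℚ))) hcon
      simp at this
  have h0 := mul_eq_zero.mp key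
  have hT := h0.resolve_right hne
  rw [hxdef, hydef] at hT
  linear_combination hT

lemma sum_range_even {M : Type*} [AddCommMonoid M] (n : ℕ) (g : ℕ → M)
    (hg : ∀ k, Odd k → g k = 0) :
    ∑ i ∈ Finset.range (2 * n + 1), g i = ∑ a ∈ Finset.range (n + 1), g (2 * a) := by
  induction n with
  | zero => simp
  | succ n ih =>
    have e1 : 2 * (n + 1) + 1 = (2 * n + 1) + 1 + 1 := by ring
    have e2 : ∑ i ∈ Finset.range ((2 * n + 1) + 1 + 1), g i
        = (∑ i ∈ Finset.range (2 * n + 1), g i) + g (2*n+1) + g (2*n+2) := by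
      rw [Finset.sum_range_succ, Finset.sum_range_succ]
    rw [e1, e2, ih, hg (2*n+1) ⟨n, by ring⟩, add_zero,
      Finset.sum_range_succ (fun a => g (2*a)) (n+1), show 2*(n+1) = 2*n+2 from by ring]

lemma sum_antidiagonal_even {M : Type*} [AddCommMonoid M] (n : ℕ) (f : ℕ → ℕ → M)
    (hf : ∀ k l, Odd k → f k l = 0) :
    ∑ p ∈ Finset.HasAntidiagonal.antidiagonal (2 * n), f p.1 p.2
      = ∑ p ∈ Finset.HasAntidiagonal.antidiagonal n, f (2 * p.1) (2 * p.2) := by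
  rw [Finset.Nat.sum_antidiagonal_eq_sum_range_succ_mk,
    Finset.Nat.sum_antidiagonal_eq_sum_range_succ_mk,
    sum_range_even n (fun i => f i (2 * n - i)) (fun k hk => hf _ _ hk)]
  refine Finset.sum_congr rfl fun a ha => ?_
  simp only [Finset.mem_range] at ha
  congr 1
  omega

lemma coeff_mul_even (u v : S) (A B : PowerSeries ℚ)
    (hA : ∀ k, Odd k → coeff (R := ℚ) k A = 0) (n : ℕ) :
    coeff (R := S) (2 * n) (rescale u (φm A) * rescale v (φm B))
      = ∑ p ∈ Finset.HasAntidiagonal.antidiagonal n,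
          algebraMap ℚ S (coeff (R := ℚ) (2 * p.1) A * coeff (R := ℚ) (2 * p.2) B)
            * (u ^ (2 * p.1) * v ^ (2 * p.2)) := by
  rw [coeff_mul]
  rw [sum_antidiagonal_even n
    (fun k l => coeff (R := S) k (rescale u (φm A)) * coeff (R := S) l (rescale v (φm B)))
    (fun k l hk => by
      simp only [coeff_rescale, φm, coeff_map, hA k hk, map_zero, mul_zero, zero_mul])]
  refine Finset.sum_congr rfl fun p _ => ?_
  simp only [coeff_rescale, φm, coeff_map, map_mul]
  ring

lemma coeff_aux (s : S) (F : PowerSeries S) (n : ℕ) :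
    coeff (R := S) (2 * n + 4) (PowerSeries.C (R := S) s * PowerSeries.X ^ 4 * F)
      = s * coeff (R := S) (2 * n) F := by
  rw [mul_assoc, coeff_C_mul, coeff_X_pow_mul]

/-- The polynomial identity obtained by extracting the homogeneous part of degree `2n+4`. -/
lemma polyId (n : ℕ) :
    ∑ p ∈ Finset.HasAntidiagonal.antidiagonal n,
      algebraMap ℚ S ((2 * (p.1 : ℚ) - 1) * (bernoulli (2 * p.1) / (2 * p.1).factorial) *
          (bernoulli (2 * p.2) / (2 * p.2).factorial))
        * ((MvPolynomial.X 0 + MvPolynomial.X 1) * MvPolynomial.X 0 * (MvPolynomial.X 1 : S) ^ 2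
             * ((MvPolynomial.X 0 : S) ^ (2 * p.1) * (MvPolynomial.X 1 : S) ^ (2 * p.2))
          - (MvPolynomial.X 0 + MvPolynomial.X 1) * (MvPolynomial.X 0 : S) ^ 2 * MvPolynomial.X 1
             * ((MvPolynomial.X 1 : S) ^ (2 * p.1) * (MvPolynomial.X 0 : S) ^ (2 * p.2))
          + (MvPolynomial.X 0 : S) ^ 3 * MvPolynomial.X 1
             * ((MvPolynomial.X 1 : S) ^ (2 * p.1)
                * (MvPolynomial.X 0 + MvPolynomial.X 1 : S) ^ (2 * p.2))
          - MvPolynomial.X 0 * (MvPolynomial.X 1 : S) ^ 3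
             * ((MvPolynomial.X 0 : S) ^ (2 * p.1)
                * (MvPolynomial.X 0 + MvPolynomial.X 1 : S) ^ (2 * p.2))) = 0 := by
  have h0 := congrArg (⇑(coeff (R := S) (2 * n + 4))) Tzero
  rw [map_sub, map_add, map_sub, map_zero] at h0
  rw [coeff_aux, coeff_aux, coeff_aux, coeff_aux] at h0
  simp only [Cr, Gr] at h0
  rw [coeff_mul_even _ _ _ _ coeff_Cs_odd, coeff_mul_even _ _ _ _ coeff_Cs_odd,
    coeff_mul_even _ _ _ _ coeff_Cs_odd, coeff_mul_even _ _ _ _ coeff_Cs_odd] at h0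
  rw [Finset.mul_sum, Finset.mul_sum, Finset.mul_sum, Finset.mul_sum] at h0
  rw [← Finset.sum_sub_distrib, ← Finset.sum_add_distrib, ← Finset.sum_sub_distrib] at h0
  rw [← h0]
  refine Finset.sum_congr rfl fun p _ => ?_
  rw [coeff_Cs2, coeff_G2]
  simp only [map_mul]
  ring

end Aux

lemma hM (hxne : x ≠ 0) (hyne : y ≠ 0) (hxyne : x + y ≠ 0) (a b : ℕ) :
    x^2 * y^2 * (x+y) * h a b
      = (x+y) * x * y^2 * (x^(2*a) * y^(2*b))
        - (x+y) * x^2 * y * (y^(2*a) * x^(2*b))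
        + x^3 * y * (y^(2*a) * (x+y)^(2*b))
        - x * y^3 * (x^(2*a) * (x+y)^(2*b)) := by
  have ix : x * x⁻¹ = 1 := mul_inv_cancel₀ hxne
  have iy : y * y⁻¹ = 1 := mul_inv_cancel₀ hyne
  have iz : (x+y) * (x+y)⁻¹ = 1 := mul_inv_cancel₀ hxyne
  rw [h]
  simp only [div_eq_mul_inv, ← inv_pow]
  linear_combination (x*(x+y)*y^2*x^(2*a)*y^(2*b)) * ix
    + (-(x^2*y*(x+y)*y^(2*a)*x^(2*b))) * iy
    + (x^3*y*y^(2*a)*(x+y)^(2*b)*(y*y⁻¹+1)*(x+y)*(x+y)⁻¹) * iy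
    + (x^3*y*y^(2*a)*(x+y)^(2*b)) * iz
    - (x*y^3*x^(2*a)*(x+y)^(2*b)*(x*x⁻¹+1)*(x+y)*(x+y)⁻¹) * ix
    - (x*y^3*x^(2*a)*(x+y)^(2*b)) * iz

/-- For all `n ≥ 1`,
`∑_{a+b=n, a,b ≥ 0} (2a-1) (B_{2a}/(2a)!) (B_{2b}/(2b)!) h_{a,b}(x,y) = 0`. -/
theorem bernoulli_h_identity (n : ℕ) (hn : 1 ≤ n) :
    ∑ p ∈ Finset.HasAntidiagonal.antidiagonal n,
      ((((2 * (p.1 : ℚ) - 1) * (bernoulli (2 * p.1) / (2 * p.1).factorial) *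
        (bernoulli (2 * p.2) / (2 * p.2).factorial)) : ℚ) : K) * h p.1 p.2 = 0 := by
  classical
  have hinj : Function.Injective (algebraMap (MvPolynomial (Fin 2) ℚ) K) :=
    IsFractionRing.injective (MvPolynomial (Fin 2) ℚ) K
  have hxne : x ≠ 0 := fun hc =>
    MvPolynomial.X_ne_zero (R := ℚ) (0 : Fin 2) (hinj (by rw [map_zero]; exact hc))
  have hyne : y ≠ 0 := fun hc =>
    MvPolynomial.X_ne_zero (R := ℚ) (1 : Fin 2) (hinj (by rw [map_zero]; exact hc))
  have hsum_ne : (MvPolynomial.X 0 + MvPolynomial.X 1 : MvPolynomial (Fin 2) ℚ) ≠ 0 := by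
    intro hcon
    have := congrArg (MvPolynomial.eval (fun _ => (1:ℚ))) hcon
    simp at this
  have hxy : x + y = algebraMap (MvPolynomial (Fin 2) ℚ) K
      (MvPolynomial.X 0 + MvPolynomial.X 1) := by rw [map_add]; rfl
  have hxyne : x + y ≠ 0 := by
    rw [hxy]
    exact fun hc => hsum_ne (hinj (by rw [map_zero]; exact hc))
  have hX0 : algebraMap (MvPolynomial (Fin 2) ℚ) K (MvPolynomial.X 0) = x := rfl
  have hX1 : algebraMap (MvPolynomial (Fin 2) ℚ) K (MvPolynomial.X 1) = y := rfl
  have hcast : ∀ q : ℚ, algebraMap (MvPolynomial (Fin 2) ℚ) K (algebraMap ℚ _ q) = (q : K) :=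
    fun q => by
      rw [← RingHom.comp_apply]
      exact eq_ratCast _ q
  have hprod : x^2 * y^2 * (x+y) ≠ 0 :=
    mul_ne_zero (mul_ne_zero (pow_ne_zero _ hxne) (pow_ne_zero _ hyne)) hxyne
  have hs : x^2 * y^2 * (x+y) * (∑ p ∈ Finset.HasAntidiagonal.antidiagonal n,
      ((((2 * (p.1 : ℚ) - 1) * (bernoulli (2 * p.1) / (2 * p.1).factorial) *
        (bernoulli (2 * p.2) / (2 * p.2).factorial)) : ℚ) : K) * h p.1 p.2) = 0 := by
    calc x^2 * y^2 * (x+y) * (∑ p ∈ Finset.HasAntidiagonal.antidiagonal n,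
        ((((2 * (p.1 : ℚ) - 1) * (bernoulli (2 * p.1) / (2 * p.1).factorial) *
          (bernoulli (2 * p.2) / (2 * p.2).factorial)) : ℚ) : K) * h p.1 p.2)
        = ∑ p ∈ Finset.HasAntidiagonal.antidiagonal n, algebraMap (MvPolynomial (Fin 2) ℚ) K
            (algebraMap ℚ (MvPolynomial (Fin 2) ℚ)
              ((2 * (p.1 : ℚ) - 1) * (bernoulli (2 * p.1) / (2 * p.1).factorial) *
                (bernoulli (2 * p.2) / (2 * p.2).factorial))
            * ((MvPolynomial.X 0 + MvPolynomial.X 1) * MvPolynomial.X 0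
                  * (MvPolynomial.X 1 : MvPolynomial (Fin 2) ℚ) ^ 2
                  * ((MvPolynomial.X 0 : MvPolynomial (Fin 2) ℚ) ^ (2 * p.1)
                      * (MvPolynomial.X 1 : MvPolynomial (Fin 2) ℚ) ^ (2 * p.2))
              - (MvPolynomial.X 0 + MvPolynomial.X 1)
                  * (MvPolynomial.X 0 : MvPolynomial (Fin 2) ℚ) ^ 2 * MvPolynomial.X 1
                  * ((MvPolynomial.X 1 : MvPolynomial (Fin 2) ℚ) ^ (2 * p.1)
                      * (MvPolynomial.X 0 : MvPolynomial (Fin 2) ℚ) ^ (2 * p.2))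
              + (MvPolynomial.X 0 : MvPolynomial (Fin 2) ℚ) ^ 3 * MvPolynomial.X 1
                  * ((MvPolynomial.X 1 : MvPolynomial (Fin 2) ℚ) ^ (2 * p.1)
                      * (MvPolynomial.X 0 + MvPolynomial.X 1 : MvPolynomial (Fin 2) ℚ) ^ (2 * p.2))
              - MvPolynomial.X 0 * (MvPolynomial.X 1 : MvPolynomial (Fin 2) ℚ) ^ 3
                  * ((MvPolynomial.X 0 : MvPolynomial (Fin 2) ℚ) ^ (2 * p.1)
                      * (MvPolynomial.X 0 + MvPolynomial.X 1 : MvPolynomial (Fin 2) ℚ) ^ (2 * p.2)))) := by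
          rw [Finset.mul_sum]
          refine Finset.sum_congr rfl fun p _ => ?_
          rw [map_mul, hcast, mul_left_comm, hM hxne hyne hxyne p.1 p.2]
          simp only [map_add, map_sub, map_mul, map_pow, hX0, hX1]
      _ = 0 := by rw [← map_sum, Aux.polyId n, map_zero]
  rcases mul_eq_zero.mp hs with h1 | h2
  · exact absurd h1 hprod
  · exact h2

end Stmt0
end
end

section
/- In the completed universal enveloping algebra ℂ⟨⟨T,A⟩⟩ of the free Lie algebra on T and A, the conjugation identity e^T · R₀ · e^{-T} = -R_∞ holds, where R₀ = (ad_T/(e^{ad_T}-1))(A) and R_∞ = (ad_T/(e^{-ad_T}-1))(A). Consequently e^T e^{λR₀} e^{-T} e^{λR_∞} = 1 for every scalar λ. -/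
open scoped BigOperators

section AuxConjR0
variable {R : Type*} [Ring R] [Algebra ℂ R]
open Finset

theorem adpow_eq (t x : R) (k : ℕ) :
    (fun y => t * y - y * t)^[k] x
      = ∑ i ∈ range (k + 1), (k.choose i) • (t ^ i * x * (-t) ^ (k - i)) := by
  have hc : Commute (LinearMap.mulLeft ℂ t) (LinearMap.mulRight ℂ (-t)) :=
    LinearMap.commute_mulLeft_right t (-t)
  have key : (fun y => t * y - y * t)^[k] x
      = ((LinearMap.mulLeft ℂ t + LinearMap.mulRight ℂ (-t)) ^ k) x := by
    induction k with
    | zero => simp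
    | succ n ih =>
      rw [Function.iterate_succ_apply', ih, pow_succ', Module.End.mul_apply]
      simp [sub_eq_add_neg, mul_neg]
  rw [key, hc.add_pow, LinearMap.sum_apply]
  refine Finset.sum_congr rfl fun i hi => ?_
  rw [Module.End.mul_apply, Module.End.mul_apply, Module.End.natCast_apply,
    LinearMap.pow_mulLeft, LinearMap.pow_mulRight, LinearMap.mulRight_apply,
    LinearMap.mulLeft_apply]
  rw [smul_mul_assoc, mul_smul_comm, mul_assoc]

theorem conj_exp (t : R) (N : ℕ) (ht : ∀ p, N ≤ p → t ^ p = 0) (x : R) :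
    (∑ k ∈ range (N + 1), ((k.factorial : ℂ))⁻¹ • t ^ k) * x *
      (∑ k ∈ range (N + 1), ((k.factorial : ℂ))⁻¹ • (-t) ^ k)
    = ∑ k ∈ range (2 * N + 2), ((k.factorial : ℂ))⁻¹ • (fun y => t * y - y * t)^[k] x := by
  have hF : ∀ p : ℕ × ℕ, True := fun _ => trivial
  set F : ℕ × ℕ → R := fun p =>
    (((p.1.factorial : ℂ))⁻¹ * ((p.2.factorial : ℂ))⁻¹) • (t ^ p.1 * x * (-t) ^ p.2) with hFdef
  have lhs_eq : (∑ k ∈ range (N + 1), ((k.factorial : ℂ))⁻¹ • t ^ k) * x *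
      (∑ k ∈ range (N + 1), ((k.factorial : ℂ))⁻¹ • (-t) ^ k)
      = ∑ p ∈ range (N + 1) ×ˢ range (N + 1), F p := by
    rw [Finset.sum_product]
    rw [Finset.sum_mul, Finset.sum_mul]
    refine Finset.sum_congr rfl fun i _ => ?_
    rw [Finset.mul_sum]
    refine Finset.sum_congr rfl fun j _ => ?_
    simp only [hFdef, smul_mul_assoc, mul_smul_comm, smul_smul, mul_comm]
  have rhs_eq : ∑ k ∈ range (2 * N + 2), ((k.factorial : ℂ))⁻¹ • (fun y => t * y - y * t)^[k] x
      = ∑ k ∈ range (2 * N + 2), ∑ p ∈ Finset.HasAntidiagonal.antidiagonal k, F p := by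
    refine Finset.sum_congr rfl fun k _ => ?_
    rw [adpow_eq, Finset.smul_sum, Finset.Nat.sum_antidiagonal_eq_sum_range_succ_mk]
    refine Finset.sum_congr rfl fun i hi => ?_
    have hik : i ≤ k := Nat.lt_succ_iff.mp (Finset.mem_range.mp hi)
    simp only [hFdef]
    rw [← Nat.cast_smul_eq_nsmul ℂ, smul_smul]
    congr 1
    rw [Nat.cast_choose ℂ hik]
    have h1 : (k.factorial : ℂ) ≠ 0 := Nat.cast_ne_zero.mpr k.factorial_ne_zero
    have h2 : (i.factorial : ℂ) ≠ 0 := Nat.cast_ne_zero.mpr i.factorial_ne_zero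
    have h3 : ((k - i).factorial : ℂ) ≠ 0 := Nat.cast_ne_zero.mpr (k - i).factorial_ne_zero
    field_simp
  rw [lhs_eq, rhs_eq, ← Finset.sum_biUnion]
  · refine Finset.sum_subset ?_ ?_
    · intro p hp
      simp only [Finset.mem_product, Finset.mem_range] at hp
      simp only [Finset.mem_biUnion, Finset.mem_range, Finset.HasAntidiagonal.mem_antidiagonal]
      exact ⟨p.1 + p.2, by omega, rfl⟩
    · intro p hp hnp
      simp only [Finset.mem_biUnion, Finset.mem_range, Finset.HasAntidiagonal.mem_antidiagonal] at hp
      simp only [Finset.mem_product, Finset.mem_range] at hnp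
      have : N < p.1 ∨ N < p.2 := by
        by_contra hc
        push_neg at hc
        exact hnp ⟨by omega, by omega⟩
      simp only [hFdef]
      rcases this with h1 | h1
      · rw [ht p.1 h1.le]; simp
      · rw [neg_pow, ht p.2 h1.le]; simp
  · intro a _ b _ hab
    simp only [Function.onFun, Finset.disjoint_left, Finset.HasAntidiagonal.mem_antidiagonal]
    intro p h1 h2
    exact hab (h1 ▸ h2)

theorem exp_mul_exp_neg (t : R) (N : ℕ) (ht : ∀ p, N ≤ p → t ^ p = 0) :
    (∑ k ∈ range (N + 1), ((k.factorial : ℂ))⁻¹ • t ^ k) *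
      (∑ k ∈ range (N + 1), ((k.factorial : ℂ))⁻¹ • (-t) ^ k) = 1 := by
  have h1 := conj_exp t N ht 1
  rw [mul_one] at h1
  rw [h1]
  have hiter : ∀ k : ℕ, (fun y => t * y - y * t)^[k] (1 : R) = if k = 0 then 1 else 0 := by
    intro k
    induction k with
    | zero => simp
    | succ n ih =>
      rw [Function.iterate_succ_apply', ih]
      by_cases hn : n = 0 <;> simp [hn]
  rw [Finset.sum_eq_single 0]
  · simp
  · intro b _ hb
    rw [hiter, if_neg hb, smul_zero]
  · intro hzero
    simp at hzero

def Wd (T A : R) (d : ℕ) : Submodule ℂ R :=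
  Submodule.span ℂ {x | ∃ l : List R, (∀ y ∈ l, y = T ∨ y = A) ∧ d ≤ l.length ∧ x = l.prod}

theorem Wd_mono (T A : R) {d' d : ℕ} (hd : d' ≤ d) : Wd T A d ≤ Wd T A d' :=
  Submodule.span_mono fun x ⟨l, h1, h2, h3⟩ => ⟨l, h1, hd.trans h2, h3⟩

theorem Wd_mul (T A : R) {a b : ℕ} {x y : R} (hx : x ∈ Wd T A a) (hy : y ∈ Wd T A b) :
    x * y ∈ Wd T A (a + b) := by
  have := Submodule.mul_mem_mul hx hy
  rw [Wd, Wd, Submodule.span_mul_span] at this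
  refine Submodule.span_le.mpr ?_ this
  rintro z ⟨u, ⟨l, hl1, hl2, rfl⟩, v, ⟨l', hl1', hl2', rfl⟩, rfl⟩
  exact Submodule.subset_span ⟨l ++ l', fun y hy => (List.mem_append.mp hy).elim (hl1 y) (hl1' y),
    by simp; omega, (List.prod_append).symm⟩

theorem T_mem_Wd (T A : R) : T ∈ Wd T A 1 :=
  Submodule.subset_span ⟨[T], by simp, by simp, by simp⟩

theorem A_mem_Wd (T A : R) : A ∈ Wd T A 1 :=
  Submodule.subset_span ⟨[A], by simp, by simp, by simp⟩

theorem one_mem_Wd (T A : R) : (1 : R) ∈ Wd T A 0 :=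
  Submodule.subset_span ⟨[], by simp, by simp, by simp⟩

theorem ad_mem_Wd (T A : R) {d : ℕ} {x : R} (hx : x ∈ Wd T A d) :
    T * x - x * T ∈ Wd T A (d + 1) := by
  refine sub_mem ?_ (Wd_mul T A hx (T_mem_Wd T A))
  have := Wd_mul T A (T_mem_Wd T A) hx
  rwa [add_comm] at this

theorem adpow_mem_Wd (T A : R) (n : ℕ) : (fun y => T * y - y * T)^[n] A ∈ Wd T A (n + 1) := by
  induction n with
  | zero => exact A_mem_Wd T A
  | succ m ih =>
    rw [Function.iterate_succ_apply']
    exact ad_mem_Wd T A ih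

theorem pow_mem_Wd (T A : R) {x : R} (hx : x ∈ Wd T A 1) (p : ℕ) : x ^ p ∈ Wd T A p := by
  induction p with
  | zero => rw [pow_zero]; exact one_mem_Wd T A
  | succ m ih =>
    rw [pow_succ]
    have := Wd_mul T A ih hx
    exact this

theorem Wd_eq_zero (T A : R) (N : ℕ)
    (h : ∀ l : List R, (∀ x ∈ l, x = T ∨ x = A) → N ≤ l.length → l.prod = 0)
    {x : R} (hx : x ∈ Wd T A N) : x = 0 := by
  have : Wd T A N ≤ ⊥ := Submodule.span_le.mpr (by
    rintro z ⟨l, h1, h2, rfl⟩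
    simp [h l h1 h2])
  simpa using this hx

theorem bsum (m : ℕ) :
    ∑ n ∈ range (m + 1), (m.choose n : ℚ) * bernoulli n = (-1) ^ m * bernoulli m := by
  rw [Finset.sum_range_succ, sum_bernoulli, Nat.choose_self]
  by_cases hm : m = 1
  · subst hm; simp [bernoulli_one]; norm_num
  · rw [if_neg hm, zero_add, Nat.cast_one, one_mul, ← bernoulli'_eq_bernoulli,
      bernoulli_eq_bernoulli'_of_ne_one hm]

theorem bern_coeff (m : ℕ) :
    ∑ p ∈ Finset.HasAntidiagonal.antidiagonal m,
        (((bernoulli p.1 : ℚ) : ℂ) / (p.1.factorial : ℂ)) * ((p.2.factorial : ℂ))⁻¹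
      = ((-1 : ℂ) ^ m * ((bernoulli m : ℚ) : ℂ)) / (m.factorial : ℂ) := by
  rw [Finset.Nat.sum_antidiagonal_eq_sum_range_succ_mk]
  have hb := congrArg (fun q : ℚ => (q : ℂ)) (bsum m)
  push_cast at hb
  rw [← hb, Finset.sum_div]
  refine Finset.sum_congr rfl fun n hn => ?_
  have hnm : n ≤ m := Nat.lt_succ_iff.mp (Finset.mem_range.mp hn)
  rw [Nat.cast_choose ℂ hnm]
  have h1 : (m.factorial : ℂ) ≠ 0 := Nat.cast_ne_zero.mpr m.factorial_ne_zero
  have h2 : (n.factorial : ℂ) ≠ 0 := Nat.cast_ne_zero.mpr n.factorial_ne_zero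
  have h3 : ((m - n).factorial : ℂ) ≠ 0 := Nat.cast_ne_zero.mpr (m - n).factorial_ne_zero
  field_simp


theorem mul_sum_mul {ι : Type*} (a c : R) (s : Finset ι) (g : ι → ℂ) (f : ι → R) :
    a * (∑ i ∈ s, g i • f i) * c = ∑ i ∈ s, g i • (a * f i * c) := by
  rw [Finset.mul_sum, Finset.sum_mul]
  exact Finset.sum_congr rfl fun i _ => by rw [mul_smul_comm, smul_mul_assoc]

end AuxConjR0

open Finset

/-- In `ℂ⟨⟨T,A⟩⟩` one has `e^T · R₀ · e^{-T} = -R_∞`, where `R₀ = (ad_T/(e^{ad_T}-1))(A)` and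
`R_∞ = (ad_T/(e^{-ad_T}-1))(A)`; consequently `e^T e^{λR₀} e^{-T} e^{λR_∞} = 1` for every
scalar `λ`.  We model the completed algebra by a `ℂ`-algebra in which every product of at
least `N` factors drawn from `{T, A}` vanishes, so that all exponential and Bernoulli series
become the finite sums written below (`ad_T/(e^{±x}-1)` has coefficients `±(∓1)^n B_n/n!`). -/
theorem conj_R0_eq_neg_Rinf {R : Type*} [Ring R] [Algebra ℂ R] (T A : R) (N : ℕ)
    (h : ∀ l : List R, (∀ x ∈ l, x = T ∨ x = A) → N ≤ l.length → l.prod = 0) :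
    let ad : R → R := fun x => T * x - x * T
    let E : R → R := fun x => ∑ k ∈ Finset.range (N + 1), ((k.factorial : ℂ))⁻¹ • x ^ k
    let R₀ : R := ∑ n ∈ Finset.range (N + 1),
      (((bernoulli n : ℚ) : ℂ) / (n.factorial : ℂ)) • ad^[n] A
    let Rinf : R := ∑ n ∈ Finset.range (N + 1),
      ((-((-1 : ℂ) ^ n * ((bernoulli n : ℚ) : ℂ))) / (n.factorial : ℂ)) • ad^[n] A
    E T * R₀ * E (-T) = -Rinf ∧
      ∀ lam : ℂ, E T * E (lam • R₀) * E (-T) * E (lam • Rinf) = 1 := by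
  intro ad E R₀ Rinf
  have had : ad = fun x => T * x - x * T := rfl
  have hE : E = fun x => ∑ k ∈ Finset.range (N + 1), ((k.factorial : ℂ))⁻¹ • x ^ k := rfl
  have hR₀ : R₀ = ∑ n ∈ Finset.range (N + 1),
      (((bernoulli n : ℚ) : ℂ) / (n.factorial : ℂ)) • ad^[n] A := rfl
  have hRinf : Rinf = ∑ n ∈ Finset.range (N + 1),
      ((-((-1 : ℂ) ^ n * ((bernoulli n : ℚ) : ℂ))) / (n.factorial : ℂ)) • ad^[n] A := rfl
  have ht : ∀ p, N ≤ p → T ^ p = 0 := by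
    intro p hp
    have := h (List.replicate p T)
      (fun x hx => Or.inl (List.eq_of_mem_replicate hx)) (by simpa using hp)
    simpa [List.prod_replicate] using this
  have hadzero : ∀ m, N ≤ m → ad^[m] A = 0 := by
    intro m hm
    rw [had]
    exact Wd_eq_zero T A N h (Wd_mono T A (by omega) (adpow_mem_Wd T A m))
  -- Part 1
  have conj1 : E T * R₀ * E (-T) = -Rinf := by
    have hrhs : -Rinf = ∑ m ∈ range (N + 1),
        (((-1 : ℂ) ^ m * ((bernoulli m : ℚ) : ℂ)) / (m.factorial : ℂ)) • ad^[m] A := by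
      rw [hRinf, ← Finset.sum_neg_distrib]
      exact Finset.sum_congr rfl fun n _ => by rw [← neg_smul, neg_div, neg_neg]
    rw [hrhs, hR₀]
    simp only [hE]
    rw [mul_sum_mul]
    have stepA : ∀ n ∈ range (N + 1),
        (((bernoulli n : ℚ) : ℂ) / (n.factorial : ℂ)) •
            ((∑ k ∈ range (N + 1), ((k.factorial : ℂ))⁻¹ • T ^ k) * ad^[n] A *
              (∑ k ∈ range (N + 1), ((k.factorial : ℂ))⁻¹ • (-T) ^ k))
          = ∑ k ∈ range (2 * N + 2),
              ((((bernoulli n : ℚ) : ℂ) / (n.factorial : ℂ)) * ((k.factorial : ℂ))⁻¹)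
                • ad^[n + k] A := by
      intro n _
      rw [had, conj_exp T N ht, Finset.smul_sum]
      refine Finset.sum_congr rfl fun k _ => ?_
      rw [smul_smul, ← Function.iterate_add_apply, Nat.add_comm k n]
    rw [Finset.sum_congr rfl stepA]
    -- reindex the double sum
    set G : ℕ × ℕ → R := fun p =>
      ((((bernoulli p.1 : ℚ) : ℂ) / (p.1.factorial : ℂ)) * ((p.2.factorial : ℂ))⁻¹)
        • ad^[p.1 + p.2] A with hG
    rw [← Finset.sum_product']
    have hstep : ∑ p ∈ range (N + 1) ×ˢ range (2 * N + 2), G p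
        = ∑ m ∈ range (N + 1), ∑ p ∈ Finset.HasAntidiagonal.antidiagonal m, G p := by
      rw [← Finset.sum_biUnion]
      · refine (Finset.sum_subset ?_ ?_).symm
        · intro p hp
          simp only [Finset.mem_biUnion, Finset.mem_range, Finset.HasAntidiagonal.mem_antidiagonal] at hp
          simp only [Finset.mem_product, Finset.mem_range]
          obtain ⟨m, hm, hpm⟩ := hp
          omega
        · intro p hp hnp
          simp only [Finset.mem_biUnion, Finset.mem_range, Finset.HasAntidiagonal.mem_antidiagonal] at hnp
          have : N ≤ p.1 + p.2 := by
            by_contra hc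
            exact hnp ⟨p.1 + p.2, by omega, rfl⟩
          simp only [hG, hadzero _ this, smul_zero]
      · intro a _ b _ hab
        simp only [Function.onFun, Finset.disjoint_left, Finset.HasAntidiagonal.mem_antidiagonal]
        intro p h1 h2
        exact hab (h1 ▸ h2)
    rw [hstep]
    refine Finset.sum_congr rfl fun m _ => ?_
    have : ∀ p ∈ Finset.HasAntidiagonal.antidiagonal m, G p
        = ((((bernoulli p.1 : ℚ) : ℂ) / (p.1.factorial : ℂ)) * ((p.2.factorial : ℂ))⁻¹)
            • ad^[m] A := by
      intro p hp
      rw [hG]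
      simp only
      rw [Finset.HasAntidiagonal.mem_antidiagonal.mp hp]
    rw [Finset.sum_congr rfl this, ← Finset.sum_smul, bern_coeff]
  refine ⟨conj1, ?_⟩
  have hEinv1 : E T * E (-T) = 1 := by
    simp only [hE]
    exact exp_mul_exp_neg T N ht
  have htn : ∀ p, N ≤ p → (-T : R) ^ p = 0 := fun p hp => by
    rw [neg_pow, ht p hp, mul_zero]
  have hEinv2 : E (-T) * E T = 1 := by
    simp only [hE]
    have := exp_mul_exp_neg (-T) N htn
    rwa [neg_neg] at this
  have hRinfW : Rinf ∈ Wd T A 1 := by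
    rw [hRinf]
    refine Submodule.sum_mem _ fun n _ => Submodule.smul_mem _ _ ?_
    rw [had]
    exact Wd_mono T A (by omega) (adpow_mem_Wd T A n)
  intro lam
  have hz : ∀ p, N ≤ p → (-(lam • Rinf)) ^ p = 0 := by
    intro p hp
    rw [neg_pow, smul_pow]
    have : Rinf ^ p = 0 := Wd_eq_zero T A N h (Wd_mono T A hp (pow_mem_Wd T A hRinfW p))
    rw [this, smul_zero, mul_zero]
  have hconj2 : E T * (lam • R₀) * E (-T) = -(lam • Rinf) := by
    rw [mul_smul_comm, smul_mul_assoc, conj1, smul_neg]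
  have hpow : ∀ k : ℕ, E T * (lam • R₀) ^ k * E (-T) = (-(lam • Rinf)) ^ k := by
    intro k
    induction k with
    | zero => rw [pow_zero, mul_one, hEinv1, pow_zero]
    | succ m ih =>
      have key : (E T * (lam • R₀) ^ m * E (-T)) * (E T * ((lam • R₀) * E (-T)))
          = E T * (lam • R₀) ^ (m + 1) * E (-T) := by
        have h1 : (E T * (lam • R₀) ^ m * E (-T)) * (E T * ((lam • R₀) * E (-T)))
            = E T * (lam • R₀) ^ m * ((E (-T) * E T) * ((lam • R₀) * E (-T))) := by
          simp only [mul_assoc]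
        rw [h1, hEinv2, one_mul, pow_succ]
        simp only [mul_assoc]
      have hconj2' : E T * ((lam • R₀) * E (-T)) = -(lam • Rinf) := by
        rw [← mul_assoc]; exact hconj2
      rw [← key, ih, hconj2', ← pow_succ]
  have hconjE : E T * E (lam • R₀) * E (-T) = E (-(lam • Rinf)) := by
    simp only [hE] at hpow ⊢
    rw [mul_sum_mul]
    refine Finset.sum_congr rfl fun k _ => ?_
    rw [hpow k]
  rw [hconjE]
  simp only [hE]
  have := exp_mul_exp_neg (-(lam • Rinf)) N hz
  rwa [neg_neg] at this
end

section
/- Let R = ℂ⟨⟨X₁,…,X_n⟩⟩ be the completed free associative algebra with coproduct Δ making each X_i primitive, and let A : [a,b] → R be a smooth function taking values in primitive elements. If X : [a,b] → R satisfies X' = A·X and X(a) = 1, then X(t) is group-like (ΔX(t) = X(t)⊗X(t) and ε(X(t)) = 1) for all t ∈ [a,b]. -/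
open Set

private lemma icc_mem_nhdsWithin_Ici' {a b t : ℝ} (ht : t ∈ Set.Ico a b) :
    Set.Icc a b ∈ nhdsWithin t (Set.Ici t) := by
  have : Set.Icc t b ∈ nhdsWithin t (Set.Ici t) := by
    rw [← Set.Ici_inter_Iic]
    exact inter_mem_nhdsWithin _ (Iic_mem_nhds ht.2)
  exact Filter.mem_of_superset this (Set.Icc_subset_Icc_left ht.1)

/-- Solutions of `X' = A·X`, `X(a) = 1` with primitive coefficient `A` are group-like.
We model the complete Hopf algebra `ℂ⟨⟨X₁,…,Xₙ⟩⟩` by a (Banach) topological algebra `R` with a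
coproduct `Δ : R → B` into a topological algebra `B` (playing the role of `R ⊗̂ R`) equipped
with the two commuting embeddings `ι₁, ι₂` (playing `r ↦ r⊗1` and `r ↦ 1⊗r`) and the
augmentation `ε`.  If `A : [a,b] → R` is continuous with `Δ(A t) = ι₁(A t) + ι₂(A t)` and
`ε(A t) = 0` (i.e. `A t` is primitive), and `X` solves `X' = A·X`, `X(a) = 1`, then for every
`t ∈ [a,b]`, `X t` is group-like: `ε(X t) = 1` and `Δ(X t) = X t ⊗ X t`
(i.e. `Δ(X t) = ι₁(X t)·ι₂(X t)`). -/
theorem solution_is_grouplike {R B : Type*}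
    [NormedRing R] [NormedAlgebra ℝ R] [CompleteSpace R]
    [NormedRing B] [NormedAlgebra ℝ B] [CompleteSpace B]
    (Δ ι₁ ι₂ : R →ₐ[ℝ] B) (ε : R →ₐ[ℝ] ℝ)
    (hΔc : Continuous Δ) (hι₁c : Continuous ι₁) (hι₂c : Continuous ι₂) (hεc : Continuous ε)
    (hcomm : ∀ u v : R, ι₁ u * ι₂ v = ι₂ v * ι₁ u)
    (a b : ℝ) (A X : ℝ → R)
    (hA : ContinuousOn A (Set.Icc a b))
    (hprim : ∀ t ∈ Set.Icc a b, Δ (A t) = ι₁ (A t) + ι₂ (A t))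
    (hεA : ∀ t ∈ Set.Icc a b, ε (A t) = 0)
    (hX : ∀ t ∈ Set.Icc a b, HasDerivWithinAt X (A t * X t) (Set.Icc a b) t)
    (hXa : X a = 1) :
    ∀ t ∈ Set.Icc a b, ε (X t) = 1 ∧ Δ (X t) = ι₁ (X t) * ι₂ (X t) := by
  -- continuous linear map versions
  let ΔL : R →L[ℝ] B := ⟨Δ.toLinearMap, hΔc⟩
  let ι₁L : R →L[ℝ] B := ⟨ι₁.toLinearMap, hι₁c⟩
  let ι₂L : R →L[ℝ] B := ⟨ι₂.toLinearMap, hι₂c⟩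
  let εL : R →L[ℝ] ℝ := ⟨ε.toLinearMap, hεc⟩
  have hXcont : ContinuousOn X (Set.Icc a b) :=
    fun t ht => (hX t ht).continuousWithinAt
  -- ε part
  have hε : ∀ t ∈ Set.Icc a b, ε (X t) = 1 := by
    have key : ∀ t ∈ Set.Icc a b, ε (X t) = ε (X a) := by
      apply constant_of_has_deriv_right_zero (hεc.comp_continuousOn hXcont)
      intro t ht
      have h1 : HasDerivWithinAt (fun s => ε (X s)) (ε (A t * X t)) (Set.Icc a b) t :=
        (εL.hasFDerivAt.comp_hasDerivWithinAt t (hX t (Set.Ico_subset_Icc_self ht)))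
      have h2 := h1.mono_of_mem_nhdsWithin (icc_mem_nhdsWithin_Ici' ht)
      rwa [map_mul, hεA t (Set.Ico_subset_Icc_self ht), zero_mul] at h2
    intro t ht
    rw [key t ht, hXa, map_one]
  refine fun t ht => ⟨hε t ht, ?_⟩
  -- Δ part via uniqueness of ODE solutions
  rcases ht with ⟨hat, htb⟩
  have hab : a ≤ b := le_trans hat htb
  -- the coefficient in B
  set C : ℝ → B := fun s => ι₁ (A s) + ι₂ (A s) with hC
  have hCcont : ContinuousOn C (Set.Icc a b) :=
    ((hι₁c.comp_continuousOn hA).add (hι₂c.comp_continuousOn hA))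
  obtain ⟨M, hM⟩ : ∃ M, ∀ s ∈ Set.Icc a b, ‖C s‖ ≤ M :=
    isCompact_Icc.exists_bound_of_continuousOn hCcont
  have hM0 : 0 ≤ M := le_trans (norm_nonneg _) (hM a ⟨le_refl a, hab⟩)
  -- the vector field, clamped to [a,b]
  let v : ℝ → B → B := fun s y => C (Set.projIcc a b hab s) * y
  have hv : ∀ s, LipschitzWith ⟨M, hM0⟩ (v s) := by
    intro s
    apply LipschitzWith.of_dist_le_mul
    intro x y
    simp only [v, dist_eq_norm, ← mul_sub]
    calc ‖C (Set.projIcc a b hab s) * (x - y)‖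
        ≤ ‖C (Set.projIcc a b hab s)‖ * ‖x - y‖ := norm_mul_le _ _
      _ ≤ M * ‖x - y‖ := by
          exact mul_le_mul_of_nonneg_right (hM _ (Set.projIcc a b hab s).2) (norm_nonneg _)
  have hveq : ∀ s ∈ Set.Icc a b, ∀ y, v s y = C s * y := by
    intro s hs y
    simp [v, Set.projIcc_of_mem hab hs]
  -- first solution: Δ ∘ X
  have hf : ContinuousOn (fun s => Δ (X s)) (Set.Icc a b) := hΔc.comp_continuousOn hXcont
  have hf' : ∀ s ∈ Set.Ico a b, HasDerivWithinAt (fun s => Δ (X s))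
      (v s (Δ (X s))) (Set.Ici s) s := by
    intro s hs
    have hsI := Set.Ico_subset_Icc_self hs
    have h1 : HasDerivWithinAt (fun s => Δ (X s)) (Δ (A s * X s)) (Set.Icc a b) s :=
      ΔL.hasFDerivAt.comp_hasDerivWithinAt s (hX s hsI)
    have h2 := h1.mono_of_mem_nhdsWithin (icc_mem_nhdsWithin_Ici' hs)
    rw [hveq s hsI]
    rwa [map_mul, hprim s hsI] at h2
  -- second solution: ι₁(X) * ι₂(X)
  have hg : ContinuousOn (fun s => ι₁ (X s) * ι₂ (X s)) (Set.Icc a b) :=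
    (hι₁c.comp_continuousOn hXcont).mul (hι₂c.comp_continuousOn hXcont)
  have hg' : ∀ s ∈ Set.Ico a b, HasDerivWithinAt (fun s => ι₁ (X s) * ι₂ (X s))
      (v s (ι₁ (X s) * ι₂ (X s))) (Set.Ici s) s := by
    intro s hs
    have hsI := Set.Ico_subset_Icc_self hs
    have h1 : HasDerivWithinAt (fun s => ι₁ (X s)) (ι₁ (A s * X s)) (Set.Icc a b) s :=
      ι₁L.hasFDerivAt.comp_hasDerivWithinAt s (hX s hsI)
    have h2 : HasDerivWithinAt (fun s => ι₂ (X s)) (ι₂ (A s * X s)) (Set.Icc a b) s :=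
      ι₂L.hasFDerivAt.comp_hasDerivWithinAt s (hX s hsI)
    have h3 := h1.mul h2
    have heq : ι₁ (A s * X s) * ι₂ (X s) + ι₁ (X s) * ι₂ (A s * X s)
        = v s (ι₁ (X s) * ι₂ (X s)) := by
      rw [hveq s hsI, map_mul, map_mul, hC, add_mul, mul_assoc]
      congr 1
      rw [← mul_assoc, hcomm (X s) (A s), mul_assoc]
    rw [← heq]
    exact (h3.mono_of_mem_nhdsWithin (icc_mem_nhdsWithin_Ici' hs))
  have huniq := ODE_solution_unique_of_mem_Icc_right (K := ⟨M, hM0⟩) (s := fun _ => Set.univ)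
    (fun s _ => (hv s).lipschitzOnWith) hf hf' (fun _ _ => trivial) hg hg'
    (fun _ _ => trivial) (by simp [hXa])
  exact huniq ⟨hat, htb⟩
end
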